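/- Let f : ℝ² → ℝ be three times continuously differentiable with ‖D³f(x)‖ ≤ C₃ for all x ∈ ℝ². Consider the degree-one graph filter response at a grid point p with grid spacing h, given by F_h(g)(p) = (α₀ + α₁)g(p) − (α₁/4)Σ_{e∈{±e₁,±e₂}} g(p + h e) for real coefficients α₀, α₁. Then for any rotation angle γ, the equivariance gap between the filter applied to the image rotated by γ around p and the filter applied to the original image is bounded by |((α₀ + α₁)f(p) − (α₁/4)Σ_{e∈{±e₁,±e₂}} f(p + h R_γ e)) − ((α₀ + α₁)f(p) − (α₁/4)Σ_{e∈{±e₁,±e₂}} f(p + h e))| ≤ (|α₁|/3)·C₃·h³, where R_γ is the rotation of ℝ² by angle γ. -/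

import Mathlib

open Set

private lemma idw_eq3 {g : ℝ → ℝ} (hg : ContDiff ℝ 3 g) {s : Set ℝ}
    (hs : UniqueDiffOn ℝ s) {y : ℝ} (hy : y ∈ s) {k : ℕ} (hk : k ≤ 3) :
    iteratedDerivWithin k g s y = iteratedDeriv k g y := by
  have H : HasFTaylorSeriesUpToOn 3 g (ftaylorSeriesWithin ℝ g univ) s :=
    (hg.contDiffOn.ftaylorSeriesWithin uniqueDiffOn_univ).mono (subset_univ s)
  have h1 : ftaylorSeriesWithin ℝ g univ y k = iteratedFDerivWithin ℝ k g s y :=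
    H.eq_iteratedFDerivWithin_of_uniqueDiffOn (by exact_mod_cast hk) hs hy
  have h2 : ftaylorSeriesWithin ℝ g univ y k = iteratedFDeriv ℝ k g y := by
    simp [ftaylorSeriesWithin, iteratedFDerivWithin_univ]
  rw [iteratedDerivWithin_eq_iteratedFDerivWithin, iteratedDeriv_eq_iteratedFDeriv,
    ← h1, h2]

private lemma line_taylor {E : Type*} [NormedAddCommGroup E] [NormedSpace ℝ E]
    {f : E → ℝ} (hf : ContDiff ℝ 3 f) {C₃ : ℝ}
    (hb : ∀ x, ‖iteratedFDeriv ℝ 3 f x‖ ≤ C₃) (p v : E) (hv : ‖v‖ ≤ 1)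
    {h : ℝ} (hh : 0 < h) :
    |f (p + h • v) - f p - h * (fderiv ℝ f p v)
      - h ^ 2 / 2 * (fderiv ℝ (fderiv ℝ f) p v v)| ≤ C₃ * h ^ 3 / 6 := by
  set c : ℝ → E := fun t => p + t • v with hc_def
  have hc : ∀ t : ℝ, HasDerivAt c v t := by
    intro t
    have := ((hasDerivAt_id t).smul_const v).const_add p
    simpa [c] using this
  set g : ℝ → ℝ := fun t => f (c t) with hg_def
  set g₁ : E → (E →L[ℝ] ℝ) := fderiv ℝ f with hg₁_def
  set g₂ := fderiv ℝ g₁ with hg₂_def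
  set g₃ := fderiv ℝ g₂ with hg₃_def
  have hg₁ : ContDiff ℝ 2 g₁ := hf.fderiv_right (by norm_num)
  have hg₂c : ContDiff ℝ 1 g₂ := hg₁.fderiv_right (by norm_num)
  have hd0 : ∀ t : ℝ, HasDerivAt g (g₁ (c t) v) t := fun t =>
    ((hf.differentiable (by norm_num) (c t)).hasFDerivAt).comp_hasDerivAt t (hc t)
  have hd1 : ∀ t : ℝ, HasDerivAt (fun s => g₁ (c s) v) (g₂ (c t) v v) t := by
    intro t
    have hA : HasDerivAt (fun s => g₁ (c s)) (g₂ (c t) v) t :=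
      ((hg₁.differentiable (by norm_num) (c t)).hasFDerivAt).comp_hasDerivAt t (hc t)
    exact (ContinuousLinearMap.apply ℝ ℝ v).hasFDerivAt.comp_hasDerivAt t hA
  have hd2 : ∀ t : ℝ, HasDerivAt (fun s => g₂ (c s) v v) (g₃ (c t) v v v) t := by
    intro t
    have hA : HasDerivAt (fun s => g₂ (c s)) (g₃ (c t) v) t :=
      ((hg₂c.differentiable (by norm_num) (c t)).hasFDerivAt).comp_hasDerivAt t (hc t)
    have hB : HasDerivAt (fun s => g₂ (c s) v) (g₃ (c t) v v) t := by
      simpa using hA.clm_apply (hasDerivAt_const t v)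
    exact (ContinuousLinearMap.apply ℝ ℝ v).hasFDerivAt.comp_hasDerivAt t hB
  have hgC : ContDiff ℝ 3 g :=
    hf.comp (contDiff_const.add (contDiff_id.smul contDiff_const))
  have hderiv1 : deriv g = fun t => g₁ (c t) v := funext fun t => (hd0 t).deriv
  have hderiv2 : iteratedDeriv 2 g = fun t => g₂ (c t) v v := by
    rw [show (2 : ℕ) = 1 + 1 from rfl, iteratedDeriv_succ, iteratedDeriv_one, hderiv1]
    exact funext fun t => (hd1 t).deriv
  have hderiv3 : iteratedDeriv 3 g = fun t => g₃ (c t) v v v := by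
    rw [show (3 : ℕ) = 2 + 1 from rfl, iteratedDeriv_succ, hderiv2]
    exact funext fun t => (hd2 t).deriv
  have hE3 : ∀ x : E, g₃ x v v v = iteratedFDeriv ℝ 3 f x ![v, v, v] := by
    intro x
    rw [iteratedFDeriv_succ_apply_right, iteratedFDeriv_two_apply]
    simp only [Fin.init, Fin.last, Matrix.cons_val_zero, Matrix.cons_val_one, Matrix.head_cons,
      Fin.castSucc, Matrix.cons_val', Matrix.cons_val_fin_one]
    rfl
  have hC₃ : 0 ≤ C₃ := le_trans (norm_nonneg _) (hb p)
  have hbound3 : ∀ t : ℝ, |iteratedDeriv 3 g t| ≤ C₃ := by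
    intro t
    have ht : iteratedDeriv 3 g t = iteratedFDeriv ℝ 3 f (c t) ![v, v, v] := by
      rw [hderiv3]; exact hE3 (c t)
    rw [ht]
    calc |iteratedFDeriv ℝ 3 f (c t) ![v, v, v]|
        ≤ ‖iteratedFDeriv ℝ 3 f (c t)‖ * ∏ i : Fin 3, ‖![v, v, v] i‖ :=
          (iteratedFDeriv ℝ 3 f (c t)).le_opNorm ![v, v, v]
      _ ≤ C₃ * 1 := by
          apply mul_le_mul (hb _) ?_ (Finset.prod_nonneg fun i _ => norm_nonneg _) hC₃
          have : (∏ i : Fin 3, ‖![v, v, v] i‖) = ‖v‖ ^ 3 := by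
            simp [Fin.prod_univ_three]; ring
          rw [this]
          exact pow_le_one₀ (norm_nonneg _) hv
      _ = C₃ := mul_one _
  -- Taylor with Lagrange remainder on [0, h]
  have hUD : UniqueDiffOn ℝ (Icc (0:ℝ) h) := uniqueDiffOn_Icc hh
  have hdiffOn : DifferentiableOn ℝ (iteratedDerivWithin 2 g (Icc 0 h)) (Ioo 0 h) := by
    intro y hy
    have hye : y ∈ Icc (0:ℝ) h := Ioo_subset_Icc_self hy
    have hda : DifferentiableAt ℝ (iteratedDeriv 2 g) y := by
      rw [hderiv2]; exact (hd2 y).differentiableAt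
    refine (hda.differentiableWithinAt.congr ?_ ?_).mono Ioo_subset_Icc_self
    · exact fun z hz => idw_eq3 hgC hUD hz (by norm_num)
    · exact idw_eq3 hgC hUD hye (by norm_num)
  obtain ⟨x', hx', hEq⟩ :=
    by
      have := taylor_mean_remainder_lagrange (n := 2) hh.ne ((hgC.of_le (by norm_num)).contDiffOn)
        (by rw [uIcc_of_le hh.le, uIoo_of_le hh.le]; exact hdiffOn)
      simp only [uIcc_of_le hh.le, uIoo_of_le hh.le] at this
      exact this
  have h0mem : (0:ℝ) ∈ Icc (0:ℝ) h := left_mem_Icc.mpr hh.le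
  have hT : taylorWithinEval g 2 (Icc 0 h) 0 h
      = g 0 + h * (g₁ p v) + h ^ 2 / 2 * (g₂ p v v) := by
    rw [taylor_within_apply, Finset.sum_range_succ, Finset.sum_range_succ,
      Finset.sum_range_one, idw_eq3 hgC hUD h0mem (by norm_num),
      idw_eq3 hgC hUD h0mem (by norm_num), idw_eq3 hgC hUD h0mem (by norm_num),
      iteratedDeriv_zero, iteratedDeriv_one, hderiv1, hderiv2]
    have hc0 : c 0 = p := by simp [hc_def]
    simp only [hc0, smul_eq_mul, sub_zero, pow_zero, pow_one, Nat.factorial,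
      Nat.cast_ofNat, Nat.cast_one]
    push_cast
    ring
  have hgoal : f (p + h • v) - f p - h * (fderiv ℝ f p v)
      - h ^ 2 / 2 * (fderiv ℝ (fderiv ℝ f) p v v)
      = g h - taylorWithinEval g 2 (Icc 0 h) 0 h := by
    rw [hT, show g 0 = f p from by simp [hg_def, hc_def]]
    ring
  rw [hgoal, hEq, idw_eq3 hgC hUD (Ioo_subset_Icc_self hx') (le_refl 3)]
  have : |iteratedDeriv 3 g x' * (h - 0) ^ 3 / ↑(Nat.factorial 3)|
      = |iteratedDeriv 3 g x'| * h ^ 3 / 6 := by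
    rw [abs_div, abs_mul]
    norm_num [Nat.factorial, abs_of_pos (pow_pos hh 3)]
  rw [this]
  have := hbound3 x'
  have h3 : (0:ℝ) < h ^ 3 := pow_pos hh 3
  calc |iteratedDeriv 3 g x'| * h ^ 3 / 6 ≤ C₃ * h ^ 3 / 6 := by gcongr
    _ = C₃ * h ^ 3 / 6 := rfl

private lemma pair_bound {E : Type*} [NormedAddCommGroup E] [NormedSpace ℝ E]
    {f : E → ℝ} (hf : ContDiff ℝ 3 f) {C₃ : ℝ}
    (hb : ∀ x, ‖iteratedFDeriv ℝ 3 f x‖ ≤ C₃) (p v : E) (hv : ‖v‖ ≤ 1)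
    {h : ℝ} (hh : 0 < h) :
    |f (p + h • v) + f (p - h • v) - 2 * f p
      - h ^ 2 * (fderiv ℝ (fderiv ℝ f) p v v)| ≤ C₃ * h ^ 3 / 3 := by
  have A := line_taylor hf hb p v hv hh
  have B := line_taylor hf hb p (-v) (by simpa using hv) hh
  have e1 : p + h • (-v) = p - h • v := by
    rw [smul_neg, ← sub_eq_add_neg]
  have e2 : fderiv ℝ f p (-v) = -(fderiv ℝ f p v) := map_neg _ _
  have e3 : fderiv ℝ (fderiv ℝ f) p (-v) (-v) = fderiv ℝ (fderiv ℝ f) p v v := by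
    simp only [map_neg, ContinuousLinearMap.neg_apply, neg_neg]
  rw [e1, e2, e3] at B
  have hsum := add_le_add A B
  have htri := (abs_add_le
    (f (p + h • v) - f p - h * (fderiv ℝ f p v)
      - h ^ 2 / 2 * (fderiv ℝ (fderiv ℝ f) p v v))
    (f (p - h • v) - f p - h * (-(fderiv ℝ f p v))
      - h ^ 2 / 2 * (fderiv ℝ (fderiv ℝ f) p v v))).trans hsum
  calc |f (p + h • v) + f (p - h • v) - 2 * f p - h ^ 2 * (fderiv ℝ (fderiv ℝ f) p v v)|
      = |(f (p + h • v) - f p - h * (fderiv ℝ f p v)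
          - h ^ 2 / 2 * (fderiv ℝ (fderiv ℝ f) p v v))
        + (f (p - h • v) - f p - h * (-(fderiv ℝ f p v))
          - h ^ 2 / 2 * (fderiv ℝ (fderiv ℝ f) p v v))| := by ring_nf
    _ ≤ C₃ * h ^ 3 / 6 + C₃ * h ^ 3 / 6 := htri
    _ = C₃ * h ^ 3 / 3 := by ring

open EuclideanSpace in
/-- For a three times continuously differentiable image signal `f : ℝ² → ℝ` with
uniformly bounded third derivative, the equivariance gap of the degree-one graph filter
`α₀ I + α₁ L` under a rotation of the sampling stencil by angle `γ` around `p` is bounded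
by `(|α₁|/3) C₃ h³`.  Here `R_γ e₁ = (cos γ, sin γ)` and `R_γ e₂ = (−sin γ, cos γ)`. -/
theorem degree_one_filter_rotation_equivariance_gap
    (f : EuclideanSpace ℝ (Fin 2) → ℝ) (C₃ : ℝ)
    (hf : ContDiff ℝ 3 f)
    (hbound : ∀ x, ‖iteratedFDeriv ℝ 3 f x‖ ≤ C₃)
    (α₀ α₁ : ℝ) (γ : ℝ) (p : EuclideanSpace ℝ (Fin 2)) (h : ℝ) (hh : 0 < h) :
    |((α₀ + α₁) * f p
        - (α₁ / 4) *
          (f (p + h • (Real.cos γ • single (0 : Fin 2) (1 : ℝ) + Real.sin γ • single (1 : Fin 2) (1 : ℝ)))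
            + f (p - h • (Real.cos γ • single (0 : Fin 2) (1 : ℝ) + Real.sin γ • single (1 : Fin 2) (1 : ℝ)))
            + f (p + h • (-Real.sin γ • single (0 : Fin 2) (1 : ℝ) + Real.cos γ • single (1 : Fin 2) (1 : ℝ)))
            + f (p - h • (-Real.sin γ • single (0 : Fin 2) (1 : ℝ) + Real.cos γ • single (1 : Fin 2) (1 : ℝ)))))
      - ((α₀ + α₁) * f p
        - (α₁ / 4) *
          (f (p + h • single (0 : Fin 2) (1 : ℝ)) + f (p - h • single (0 : Fin 2) (1 : ℝ))
            + f (p + h • single (1 : Fin 2) (1 : ℝ)) + f (p - h • single (1 : Fin 2) (1 : ℝ))))|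
      ≤ (|α₁| / 3) * C₃ * h ^ 3 := by
  set E1 : EuclideanSpace ℝ (Fin 2) := single (0 : Fin 2) (1 : ℝ) with hE1
  set E2 : EuclideanSpace ℝ (Fin 2) := single (1 : Fin 2) (1 : ℝ) with hE2
  set u : EuclideanSpace ℝ (Fin 2) := Real.cos γ • E1 + Real.sin γ • E2 with hu
  set w : EuclideanSpace ℝ (Fin 2) := -Real.sin γ • E1 + Real.cos γ • E2 with hw
  have hnE1 : ‖E1‖ = 1 := by simp [hE1, EuclideanSpace.norm_single]
  have hnE2 : ‖E2‖ = 1 := by simp [hE2, EuclideanSpace.norm_single]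
  have hnu : ‖u‖ = 1 := by
    rw [EuclideanSpace.norm_eq]
    have h0 : ∀ j : Fin 2, u j = if j = 0 then Real.cos γ else Real.sin γ := by
      intro j
      fin_cases j <;>
        simp [hu, hE1, hE2, EuclideanSpace.single_apply]
    rw [Fin.sum_univ_two, h0 0, h0 1]
    norm_num [Real.norm_eq_abs, sq_abs]
  have hnw : ‖w‖ = 1 := by
    rw [EuclideanSpace.norm_eq]
    have h0 : ∀ j : Fin 2, w j = if j = 0 then -Real.sin γ else Real.cos γ := by
      intro j
      fin_cases j <;>
        simp [hw, hE1, hE2, EuclideanSpace.single_apply]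
    rw [Fin.sum_univ_two, h0 0, h0 1]
    norm_num [Real.norm_eq_abs, sq_abs]
  have Pu := pair_bound hf hbound p u hnu.le hh
  have Pw := pair_bound hf hbound p w hnw.le hh
  have P1 := pair_bound hf hbound p E1 hnE1.le hh
  have P2 := pair_bound hf hbound p E2 hnE2.le hh
  set B2 := fderiv ℝ (fderiv ℝ f) p with hB2
  have hQQ : B2 u u + B2 w w = B2 E1 E1 + B2 E2 E2 := by
    simp only [hu, hw, map_add, map_smul, ContinuousLinearMap.add_apply,
      ContinuousLinearMap.smul_apply, smul_eq_mul]
    linear_combination ((B2 E1) E1 + (B2 E2) E2) * Real.sin_sq_add_cos_sq γ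
  set Au := f (p + h • u) + f (p - h • u) - 2 * f p - h ^ 2 * (B2 u u) with hAu
  set Aw := f (p + h • w) + f (p - h • w) - 2 * f p - h ^ 2 * (B2 w w) with hAw
  set A1 := f (p + h • E1) + f (p - h • E1) - 2 * f p - h ^ 2 * (B2 E1 E1) with hA1
  set A2 := f (p + h • E2) + f (p - h • E2) - 2 * f p - h ^ 2 * (B2 E2 E2) with hA2
  have hmain : ((α₀ + α₁) * f p
        - (α₁ / 4) * (f (p + h • u) + f (p - h • u) + f (p + h • w) + f (p - h • w)))
      - ((α₀ + α₁) * f p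
        - (α₁ / 4) * (f (p + h • E1) + f (p - h • E1) + f (p + h • E2) + f (p - h • E2)))
      = -(α₁ / 4) * ((Au + Aw) - (A1 + A2)) := by
    rw [hAu, hAw, hA1, hA2]
    linear_combination (-(α₁ / 4)) * h ^ 2 * hQQ
  rw [hmain, abs_mul, abs_neg, abs_div]
  have habs : |(Au + Aw) - (A1 + A2)| ≤ 4 * (C₃ * h ^ 3 / 3) := by
    have t1 : |Au + Aw| ≤ C₃ * h ^ 3 / 3 + C₃ * h ^ 3 / 3 := (abs_add_le _ _).trans (add_le_add Pu Pw)
    have t2 : |A1 + A2| ≤ C₃ * h ^ 3 / 3 + C₃ * h ^ 3 / 3 := (abs_add_le _ _).trans (add_le_add P1 P2)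
    calc |(Au + Aw) - (A1 + A2)| ≤ |Au + Aw| + |A1 + A2| := abs_sub _ _
      _ ≤ (C₃ * h ^ 3 / 3 + C₃ * h ^ 3 / 3) + (C₃ * h ^ 3 / 3 + C₃ * h ^ 3 / 3) := add_le_add t1 t2
      _ = 4 * (C₃ * h ^ 3 / 3) := by ring
  have h4 : |(4:ℝ)| = 4 := by norm_num
  rw [h4]
  calc |α₁| / 4 * |(Au + Aw) - (A1 + A2)| ≤ |α₁| / 4 * (4 * (C₃ * h ^ 3 / 3)) := by
        apply mul_le_mul_of_nonneg_left habs (by positivity)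
    _ = (|α₁| / 3) * C₃ * h ^ 3 := by ring
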